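/- Let V : ℝ³ → ℝ be continuous with V(λx) = λ^s V(x) for all λ > 0 and some s > 2, and V(x) > 0 for |x| = 1. For every g > 0 and Ω ≥ 0, the Thomas–Fermi functional 𝓔^TF_{g,Ω} attains its infimum over the admissible class at ρ^TF_{g,Ω}(x) = (1/(2g)) · max( μ + (Ω²/4) r(x)² − V(x), 0 ), where μ ∈ ℝ is the unique real number for which ∫_{ℝ³} ρ^TF_{g,Ω} = 1; this minimizer is unique up to sets of Lebesgue measure zero. -/

import Mathlib

open MeasureTheory Filter Topology

noncomputable section

/-- Three-dimensional Euclidean space. -/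
abbrev E3 := EuclideanSpace ℝ (Fin 3)

/-- The distance `r(x) = √(x₁² + x₂²)` from `x` to the `x₃`-axis. -/
def rax (x : E3) : ℝ := Real.sqrt (x 0 ^ 2 + x 1 ^ 2)

/-- The integrand of the 3D Thomas–Fermi functional:
`V ρ − (Ω²/4) r² ρ + g ρ²`. -/
def tfIntegrand (V : E3 → ℝ) (g Ω : ℝ) (ρ : E3 → ℝ) (x : E3) : ℝ :=
  V x * ρ x - Ω ^ 2 / 4 * rax x ^ 2 * ρ x + g * ρ x ^ 2

/-- Admissible densities for the 3D Thomas–Fermi problem: measurable, nonnegative,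
in `L¹ ∩ L²`, with finite potential terms and unit mass. -/
def tfAdmissible (V : E3 → ℝ) (ρ : E3 → ℝ) : Prop :=
  Measurable ρ ∧ (∀ x, 0 ≤ ρ x) ∧ Integrable ρ ∧ Integrable (fun x => ρ x ^ 2) ∧
    Integrable (fun x => V x * ρ x) ∧ Integrable (fun x => rax x ^ 2 * ρ x) ∧
    (∫ x, ρ x) = 1

/-- The 3D Thomas–Fermi energy `E^TF_{g,Ω}`. -/
def ETF (V : E3 → ℝ) (g Ω : ℝ) : ℝ :=
  sInf { e | ∃ ρ : E3 → ℝ, tfAdmissible V ρ ∧ e = ∫ x, tfIntegrand V g Ω ρ x }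

/-- The candidate Thomas–Fermi minimizer with chemical potential `μ`:
`ρ^TF_{g,Ω}(x) = (1/(2g)) [μ + (Ω²/4) r(x)² − V(x)]₊`. -/
def rhoTF (V : E3 → ℝ) (g Ω μ : ℝ) (x : E3) : ℝ :=
  1 / (2 * g) * max (μ + Ω ^ 2 / 4 * rax x ^ 2 - V x) 0

/-- Homogeneity of degree `s`: `V(λx) = λ^s V(x)` for all `λ > 0`. -/
def Homogeneous (V : E3 → ℝ) (s : ℝ) : Prop :=
  ∀ lam : ℝ, 0 < lam → ∀ x : E3, V (lam • x) = lam ^ s * V x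

/-- The effective potential `W(x) = V(x) − (1/4) r(x)²`. -/
def Wpot (V : E3 → ℝ) (x : E3) : ℝ := V x - 1 / 4 * rax x ^ 2

/- ### Auxiliary lemmas -/

lemma rax_continuous : Continuous rax := by
  apply Real.continuous_sqrt.comp
  exact (((continuous_apply 0).comp (PiLp.continuous_ofLp 2 _)).pow 2).add
    (((continuous_apply 1).comp (PiLp.continuous_ofLp 2 _)).pow 2)

lemma rax_sq (x : E3) : rax x ^ 2 = x 0 ^ 2 + x 1 ^ 2 :=
  Real.sq_sqrt (by positivity)

lemma rax_sq_le (x : E3) : rax x ^ 2 ≤ ‖x‖ ^ 2 := by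
  rw [rax_sq, EuclideanSpace.norm_eq, Real.sq_sqrt (by positivity), Fin.sum_univ_three]
  simp only [Real.norm_eq_abs, sq_abs]
  nlinarith [sq_nonneg (x 2)]

lemma V_lower (V : E3 → ℝ) (hVc : Continuous V) (s : ℝ) (hs : 0 < s)
    (hhom : Homogeneous V s) (hVpos : ∀ x : E3, ‖x‖ = 1 → 0 < V x) :
    ∃ c > 0, ∀ x : E3, c * ‖x‖ ^ s ≤ V x := by
  have hsc : IsCompact (Metric.sphere (0:E3) 1) := isCompact_sphere 0 1
  have hne : (Metric.sphere (0:E3) 1).Nonempty :=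
    NormedSpace.sphere_nonempty.2 zero_le_one
  obtain ⟨x₀, hx₀, hmin⟩ := hsc.exists_isMinOn hne hVc.continuousOn
  have hx₀n : ‖x₀‖ = 1 := by simpa using mem_sphere_zero_iff_norm.1 hx₀
  refine ⟨V x₀, hVpos x₀ hx₀n, fun x => ?_⟩
  rcases eq_or_ne x 0 with rfl | hx
  · have h2 := hhom 2 (by norm_num) 0
    simp only [smul_zero] at h2
    have hV0 : V 0 = 0 := by
      have h2s : (1:ℝ) < 2 ^ s :=
        Real.one_lt_rpow_iff_of_pos (by norm_num) |>.2 (Or.inl ⟨by norm_num, hs⟩)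
      nlinarith
    rw [hV0, norm_zero, Real.zero_rpow hs.ne', mul_zero]
  · have hxn : 0 < ‖x‖ := norm_pos_iff.2 hx
    set u : E3 := ‖x‖⁻¹ • x with hu
    have hun : u ∈ Metric.sphere (0:E3) 1 := by
      simp [hu, mem_sphere_zero_iff_norm, norm_smul, abs_of_pos (inv_pos.2 hxn),
        inv_mul_cancel₀ hxn.ne']
    have hxu : (‖x‖ : ℝ) • u = x := by
      rw [hu, smul_smul, mul_inv_cancel₀ hxn.ne', one_smul]
    have := hhom ‖x‖ hxn u
    rw [hxu] at this
    rw [this, mul_comm]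
    exact mul_le_mul_of_nonneg_left (hmin hun) (Real.rpow_nonneg hxn.le s)

lemma scalar_coercive (c a : ℝ) (hc : 0 < c) (s : ℝ) (hs : 2 < s) (μ : ℝ) :
    ∃ R ≥ 1, ∀ t : ℝ, R ≤ t → μ ≤ c * t ^ s - a * t ^ 2 := by
  have h1 : Tendsto (fun t : ℝ => c * t ^ (s - 2) - a) atTop atTop := by
    have := (tendsto_rpow_atTop (by linarith : 0 < s - 2)).const_mul_atTop hc
    simpa [sub_eq_add_neg] using tendsto_atTop_add_const_right atTop (-a) this
  have h2 : Tendsto (fun t : ℝ => t ^ 2 * (c * t ^ (s - 2) - a)) atTop atTop :=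
    (tendsto_pow_atTop (two_ne_zero)).atTop_mul_atTop₀ h1
  have h3 := (h2.eventually_ge_atTop μ).and (eventually_ge_atTop (1:ℝ))
  obtain ⟨R, hR⟩ := eventually_atTop.1 h3
  refine ⟨max R 1, le_max_right _ _, fun t ht => ?_⟩
  obtain ⟨h4, h5⟩ := hR t (le_trans (le_max_left _ _) ht)
  have htpos : (0:ℝ) < t := lt_of_lt_of_le one_pos h5
  have hts : t ^ s = t ^ 2 * t ^ (s - 2) := by
    rw [← Real.rpow_natCast t 2, ← Real.rpow_add htpos]
    norm_num
  have : c * t ^ s = t ^ 2 * (c * t ^ (s - 2)) := by rw [hts]; ring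
  nlinarith [h4]

lemma coercive (V : E3 → ℝ) (hVc : Continuous V) (s : ℝ) (hs : 2 < s)
    (hhom : Homogeneous V s) (hVpos : ∀ x : E3, ‖x‖ = 1 → 0 < V x)
    (a : ℝ) (ha : 0 ≤ a) (μ : ℝ) :
    ∃ R > 0, ∀ x : E3, R ≤ ‖x‖ → μ ≤ V x - a * rax x ^ 2 := by
  obtain ⟨c, hc, hV⟩ := V_lower V hVc s (by linarith) hhom hVpos
  obtain ⟨R, hR1, hR⟩ := scalar_coercive c a hc s hs μ
  refine ⟨R, lt_of_lt_of_le one_pos hR1, fun x hx => ?_⟩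
  have h1 := hR ‖x‖ hx
  have h2 := hV x
  have h3 : a * rax x ^ 2 ≤ a * ‖x‖ ^ 2 := mul_le_mul_of_nonneg_left (rax_sq_le x) ha
  linarith

section RhoTF

variable (V : E3 → ℝ) (g Ω μ : ℝ)

lemma rhoTF_continuous (hVc : Continuous V) : Continuous (rhoTF V g Ω μ) :=
  continuous_const.mul (((continuous_const.add
    (continuous_const.mul (rax_continuous.pow 2))).sub hVc).max continuous_const)

lemma rhoTF_nonneg (hg : 0 < g) (x : E3) : 0 ≤ rhoTF V g Ω μ x :=
  mul_nonneg (by positivity) (le_max_right _ _)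

lemma rhoTF_eq_zero (x : E3) (h : μ + Ω ^ 2 / 4 * rax x ^ 2 - V x ≤ 0) :
    rhoTF V g Ω μ x = 0 := by
  rw [rhoTF, max_eq_right h, mul_zero]

lemma rhoTF_hasCompactSupport (hVc : Continuous V) (s : ℝ) (hs : 2 < s)
    (hhom : Homogeneous V s) (hVpos : ∀ x : E3, ‖x‖ = 1 → 0 < V x) (hΩ : 0 ≤ Ω) :
    HasCompactSupport (rhoTF V g Ω μ) := by
  obtain ⟨R, hR0, hR⟩ := coercive V hVc s hs hhom hVpos (Ω ^ 2 / 4) (by positivity) μ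
  refine HasCompactSupport.intro (isCompact_closedBall (0:E3) R) (fun x hx => ?_)
  have : R ≤ ‖x‖ := by
    have := Metric.mem_closedBall.not.1 hx
    push_neg at this
    simpa [dist_zero_right] using this.le
  exact rhoTF_eq_zero V g Ω μ x (by linarith [hR x this])

end RhoTF

section Main

variable (V : E3 → ℝ) (hVc : Continuous V) (s : ℝ) (hs : 2 < s)
  (hhom : Homogeneous V s) (hVpos : ∀ x : E3, ‖x‖ = 1 → 0 < V x)
  (g Ω : ℝ) (hg : 0 < g) (hΩ : 0 ≤ Ω)

include hVc hs hhom hVpos hΩ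

lemma rhoTF_integrable (μ : ℝ) : Integrable (rhoTF V g Ω μ) :=
  (rhoTF_continuous V g Ω μ hVc).integrable_of_hasCompactSupport
    (rhoTF_hasCompactSupport V g Ω μ hVc s hs hhom hVpos hΩ)

lemma rhoTF_mul_integrable (μ : ℝ) (f : E3 → ℝ) (hf : Continuous f) :
    Integrable (fun x => f x * rhoTF V g Ω μ x) :=
  (hf.mul (rhoTF_continuous V g Ω μ hVc)).integrable_of_hasCompactSupport
    ((rhoTF_hasCompactSupport V g Ω μ hVc s hs hhom hVpos hΩ).mul_left)

lemma rhoTF_admissible (μ : ℝ) (hμ : (∫ x, rhoTF V g Ω μ x) = 1) (hg : 0 < g) :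
    tfAdmissible V (rhoTF V g Ω μ) := by
  refine ⟨(rhoTF_continuous V g Ω μ hVc).measurable, rhoTF_nonneg V g Ω μ hg,
    rhoTF_integrable V hVc s hs hhom hVpos g Ω hΩ μ, ?_, ?_, ?_, hμ⟩
  · simpa [pow_two] using rhoTF_mul_integrable V hVc s hs hhom hVpos g Ω hΩ μ
      (rhoTF V g Ω μ) (rhoTF_continuous V g Ω μ hVc)
  · exact rhoTF_mul_integrable V hVc s hs hhom hVpos g Ω hΩ μ V hVc
  · exact rhoTF_mul_integrable V hVc s hs hhom hVpos g Ω hΩ μ _ (rax_continuous.pow 2)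

end Main
lemma rhoTF_mono (V : E3 → ℝ) (g Ω : ℝ) (hg : 0 < g) {μ₁ μ₂ : ℝ} (h : μ₁ ≤ μ₂) (x : E3) :
    rhoTF V g Ω μ₁ x ≤ rhoTF V g Ω μ₂ x := by
  apply mul_le_mul_of_nonneg_left _ (by positivity)
  exact max_le_max (by linarith) le_rfl

lemma F_cont (V : E3 → ℝ) (hVc : Continuous V) (s : ℝ) (hs : 2 < s)
    (hhom : Homogeneous V s) (hVpos : ∀ x : E3, ‖x‖ = 1 → 0 < V x)
    (g Ω : ℝ) (hg : 0 < g) (hΩ : 0 ≤ Ω) :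
    Continuous (fun μ => ∫ x, rhoTF V g Ω μ x) := by
  rw [continuous_iff_continuousAt]
  intro μ₀
  apply continuousAt_of_dominated (bound := rhoTF V g Ω (μ₀ + 1))
  · exact Eventually.of_forall fun μ =>
      ((rhoTF_continuous V g Ω μ hVc).measurable).aestronglyMeasurable
  · filter_upwards [Metric.ball_mem_nhds μ₀ one_pos] with μ hμ
    refine Eventually.of_forall fun x => ?_
    rw [Real.norm_of_nonneg (rhoTF_nonneg V g Ω μ hg x)]
    refine rhoTF_mono V g Ω hg ?_ x
    have := Metric.mem_ball.1 hμ
    rw [Real.dist_eq, abs_lt] at this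
    linarith [this.2]
  · exact rhoTF_integrable V hVc s hs hhom hVpos g Ω hΩ (μ₀ + 1)
  · refine Eventually.of_forall fun x => ?_
    exact (continuous_const.mul (((continuous_id.add continuous_const).sub
      continuous_const).max continuous_const)).continuousAt
      (x := μ₀)

lemma F_exists_one (V : E3 → ℝ) (hVc : Continuous V) (s : ℝ) (hs : 2 < s)
    (hhom : Homogeneous V s) (hVpos : ∀ x : E3, ‖x‖ = 1 → 0 < V x)
    (g Ω : ℝ) (hg : 0 < g) (hΩ : 0 ≤ Ω) :
    ∃ μ : ℝ, (∫ x, rhoTF V g Ω μ x) = 1 := by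
  obtain ⟨R, hR0, hR⟩ := coercive V hVc s hs hhom hVpos (Ω ^ 2 / 4) (by positivity) 0
  obtain ⟨y₀, _, hy₀⟩ := (isCompact_closedBall (0:E3) R).exists_isMinOn
    ⟨0, Metric.mem_closedBall_self hR0.le⟩
    ((hVc.sub (continuous_const.mul (rax_continuous.pow 2)))).continuousOn
  set μ₀ : ℝ := min (V y₀ - Ω ^ 2 / 4 * rax y₀ ^ 2) 0 with hμ₀def
  have hF0 : (∫ x, rhoTF V g Ω μ₀ x) = 0 := by
    have hz : ∀ x, rhoTF V g Ω μ₀ x = 0 := by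
      intro x
      apply rhoTF_eq_zero
      rcases le_or_gt ‖x‖ R with hx | hx
      · have h1 := hy₀ (Metric.mem_closedBall.2 (by simpa [dist_zero_right] using hx))
        simp only [Set.mem_setOf_eq] at h1
        have h2 : μ₀ ≤ V x - Ω ^ 2 / 4 * rax x ^ 2 := le_trans (min_le_left _ _) h1
        linarith
      · have h1 := hR x hx.le
        have h2 : μ₀ ≤ (0:ℝ) := min_le_right _ _
        linarith
    simp [hz]
  set B := Metric.closedBall (0:E3) 1 with hBdef
  obtain ⟨z₀, _, hz₀⟩ := (isCompact_closedBall (0:E3) 1).exists_isMaxOn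
    ⟨0, Metric.mem_closedBall_self one_pos.le⟩ hVc.continuousOn
  set vb := (volume B).toReal with hvb
  have hvbpos : 0 < vb := by
    rw [hvb]
    exact ENNReal.toReal_pos (Metric.measure_closedBall_pos volume (0:E3) one_pos).ne'
      (measure_closedBall_lt_top).ne
  set μ₁ : ℝ := max (V z₀ + 2 * g / vb) (μ₀ + 1) with hμ₁def
  have hF1 : 1 ≤ ∫ x, rhoTF V g Ω μ₁ x := by
    have hle : ∀ x ∈ B, 2 * g / vb * (1 / (2*g)) ≤ rhoTF V g Ω μ₁ x := by
      intro x hx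
      have h1 : V x ≤ V z₀ := hz₀ hx
      have h2 : 2 * g / vb ≤ μ₁ + Ω ^ 2 / 4 * rax x ^ 2 - V x := by
        have h3 : V z₀ + 2 * g / vb ≤ μ₁ := le_max_left _ _
        nlinarith [sq_nonneg (rax x), sq_nonneg Ω]
      calc 2 * g / vb * (1 / (2*g)) = 1 / (2*g) * (2*g/vb) := by ring
      _ ≤ rhoTF V g Ω μ₁ x := by
          apply mul_le_mul_of_nonneg_left _ (by positivity)
          exact le_max_of_le_left h2
    have hint := rhoTF_integrable V hVc s hs hhom hVpos g Ω hΩ μ₁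
    have h3 := setIntegral_ge_of_const_le (measurableSet_closedBall (x := (0:E3)) (ε := 1))
      (measure_closedBall_lt_top).ne hle hint.integrableOn
    have h4 := setIntegral_le_integral (s := B) hint
      (Eventually.of_forall (rhoTF_nonneg V g Ω μ₁ hg))
    have h5 : 2 * g / vb * (1/(2*g)) * vb = 1 := by
      field_simp
    calc (1:ℝ) = 2 * g / vb * (1/(2*g)) * vb := h5.symm
    _ ≤ ∫ x in B, rhoTF V g Ω μ₁ x := by
      have h3' := h3; rw [smul_eq_mul, mul_comm] at h3'; exact h3'
    _ ≤ _ := h4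
  have hcont := F_cont V hVc s hs hhom hVpos g Ω hg hΩ
  have hmono : μ₀ ≤ μ₁ := le_trans (by linarith) (le_max_right _ _)
  have hivt := intermediate_value_Icc hmono hcont.continuousOn
  have h1mem : (1:ℝ) ∈ Set.Icc ((∫ x, rhoTF V g Ω μ₀ x)) (∫ x, rhoTF V g Ω μ₁ x) := by
    rw [hF0]; exact ⟨one_pos.le, hF1⟩
  obtain ⟨μ, _, hμ⟩ := hivt h1mem
  exact ⟨μ, hμ⟩
lemma F_unique (V : E3 → ℝ) (hVc : Continuous V) (s : ℝ) (hs : 2 < s)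
    (hhom : Homogeneous V s) (hVpos : ∀ x : E3, ‖x‖ = 1 → 0 < V x)
    (g Ω : ℝ) (hg : 0 < g) (hΩ : 0 ≤ Ω) {μa μb : ℝ}
    (ha : (∫ x, rhoTF V g Ω μa x) = 1) (hb : (∫ x, rhoTF V g Ω μb x) = 1) : μa = μb := by
  -- enough to rule out strict inequalities, by symmetry
  have main : ∀ μ₁ μ₂ : ℝ, μ₁ < μ₂ → (∫ x, rhoTF V g Ω μ₁ x) = 1 →
      (∫ x, rhoTF V g Ω μ₂ x) = 1 → False := by
    intro μ₁ μ₂ h12 h1 h2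
    set d := fun x => rhoTF V g Ω μ₂ x - rhoTF V g Ω μ₁ x with hd
    have hdint : Integrable d :=
      (rhoTF_integrable V hVc s hs hhom hVpos g Ω hΩ μ₂).sub
        (rhoTF_integrable V hVc s hs hhom hVpos g Ω hΩ μ₁)
    have hdnn : ∀ x, 0 ≤ d x := fun x => sub_nonneg.2 (rhoTF_mono V g Ω hg h12.le x)
    have hdzero : (∫ x, d x) = 0 := by
      rw [hd]
      rw [integral_sub (rhoTF_integrable V hVc s hs hhom hVpos g Ω hΩ μ₂)
        (rhoTF_integrable V hVc s hs hhom hVpos g Ω hΩ μ₁), h1, h2, sub_self]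
    have hsupp : Function.support (rhoTF V g Ω μ₂) ⊆ Function.support d := by
      intro x hx
      have hnn := rhoTF_nonneg V g Ω μ₂ hg x
      have hpos : 0 < rhoTF V g Ω μ₂ x := lt_of_le_of_ne hnn (Ne.symm hx)
      have hmaxpos : 0 < μ₂ + Ω ^ 2 / 4 * rax x ^ 2 - V x := by
        by_contra h
        push_neg at h
        rw [rhoTF_eq_zero V g Ω μ₂ x h] at hpos
        exact lt_irrefl 0 hpos
      have hlt : rhoTF V g Ω μ₁ x < rhoTF V g Ω μ₂ x := by
        rw [rhoTF, rhoTF, max_eq_left hmaxpos.le]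
        apply mul_lt_mul_of_pos_left _ (by positivity)
        rcases le_or_gt (μ₁ + Ω ^ 2 / 4 * rax x ^ 2 - V x) 0 with h | h
        · rw [max_eq_right h]; linarith
        · rw [max_eq_left h.le]; linarith
      simp only [Function.mem_support, hd]
      intro hcon
      rw [sub_eq_zero] at hcon
      exact absurd hcon (ne_of_gt hlt)
    have hpos2 : 0 < volume (Function.support (rhoTF V g Ω μ₂)) := by
      rw [← integral_pos_iff_support_of_nonneg_ae
        (Eventually.of_forall (rhoTF_nonneg V g Ω μ₂ hg))
        (rhoTF_integrable V hVc s hs hhom hVpos g Ω hΩ μ₂)]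
      rw [h2]; exact one_pos
    have hzero : volume (Function.support d) = 0 := by
      by_contra h
      have : 0 < volume (Function.support d) := pos_iff_ne_zero.2 h
      rw [← integral_pos_iff_support_of_nonneg_ae (Eventually.of_forall hdnn) hdint] at this
      rw [hdzero] at this
      exact lt_irrefl 0 this
    exact absurd hzero (ne_of_gt (lt_of_lt_of_le hpos2 (measure_mono hsupp)))
  rcases lt_trichotomy μa μb with h | h | h
  · exact absurd (main μa μb h ha hb) (fun f => f)
  · exact h
  · exact absurd (main μb μa h hb ha) (fun f => f)

lemma tfIntegrand_integrable (V : E3 → ℝ) (g Ω : ℝ) (ρ : E3 → ℝ) (h : tfAdmissible V ρ) :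
    Integrable (fun x => tfIntegrand V g Ω ρ x) := by
  obtain ⟨-, -, -, hsq, hVρ, hrρ, -⟩ := h
  have h1 : Integrable (fun x => Ω ^ 2 / 4 * (rax x ^ 2 * ρ x)) := hrρ.const_mul _
  have h2 : Integrable (fun x => g * ρ x ^ 2) := hsq.const_mul _
  have := (hVρ.sub h1).add h2
  exact this.congr (Eventually.of_forall fun x => by simp [tfIntegrand]; ring)
lemma sq_diff_integrable (V : E3 → ℝ) (hVc : Continuous V) (s : ℝ) (hs : 2 < s)
    (hhom : Homogeneous V s) (hVpos : ∀ x : E3, ‖x‖ = 1 → 0 < V x)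
    (g Ω : ℝ) (hg : 0 < g) (hΩ : 0 ≤ Ω) (μ : ℝ)
    (ρ : E3 → ℝ) (hρ : tfAdmissible V ρ) :
    Integrable (fun x => (ρ x - rhoTF V g Ω μ x) ^ 2) := by
  set T := rhoTF V g Ω μ with hT
  have hTc := rhoTF_continuous V g Ω μ hVc
  have hTsq : Integrable (fun x => T x ^ 2) := by
    simpa [pow_two] using rhoTF_mul_integrable V hVc s hs hhom hVpos g Ω hΩ μ T hTc
  have hmul : Integrable (fun x => ρ x * T x) := by
    apply Integrable.mono' (hρ.2.2.2.1.add hTsq)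
      (hρ.1.aestronglyMeasurable.mul hTc.measurable.aestronglyMeasurable)
    refine Eventually.of_forall fun x => ?_
    rw [Real.norm_eq_abs, abs_le]
    simp only [Pi.mul_apply, Pi.add_apply]
    constructor <;> nlinarith [sq_nonneg (ρ x - T x), sq_nonneg (ρ x + T x)]
  have := (hρ.2.2.2.1.sub (hmul.const_mul 2)).add hTsq
  exact this.congr (Eventually.of_forall fun x => by
    simp only [Pi.add_apply, Pi.sub_apply]
    ring)

lemma key_ineq (V : E3 → ℝ) (hVc : Continuous V) (s : ℝ) (hs : 2 < s)
    (hhom : Homogeneous V s) (hVpos : ∀ x : E3, ‖x‖ = 1 → 0 < V x)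
    (g Ω : ℝ) (hg : 0 < g) (hΩ : 0 ≤ Ω) (μ : ℝ)
    (hμ : (∫ x, rhoTF V g Ω μ x) = 1)
    (ρ : E3 → ℝ) (hρ : tfAdmissible V ρ) :
    (∫ x, tfIntegrand V g Ω (rhoTF V g Ω μ) x) + g * ∫ x, (ρ x - rhoTF V g Ω μ x) ^ 2
      ≤ ∫ x, tfIntegrand V g Ω ρ x := by
  set T := rhoTF V g Ω μ with hT
  have hadmT : tfAdmissible V T := rhoTF_admissible V hVc s hs hhom hVpos g Ω hΩ μ hμ hg
  have hfint : Integrable (fun x => tfIntegrand V g Ω ρ x - tfIntegrand V g Ω T x) :=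
    (tfIntegrand_integrable V g Ω ρ hρ).sub (tfIntegrand_integrable V g Ω T hadmT)
  have hd2 : Integrable (fun x => (ρ x - T x) ^ 2) :=
    sq_diff_integrable V hVc s hs hhom hVpos g Ω hg hΩ μ ρ hρ
  have hdiff : Integrable (fun x => ρ x - T x) := hρ.2.2.1.sub hadmT.2.2.1
  have hhint : Integrable (fun x => μ * (ρ x - T x) + g * (ρ x - T x) ^ 2) :=
    (hdiff.const_mul μ).add (hd2.const_mul g)
  have hpt : ∀ x, μ * (ρ x - T x) + g * (ρ x - T x) ^ 2
      ≤ tfIntegrand V g Ω ρ x - tfIntegrand V g Ω T x := by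
    intro x
    set a := ρ x
    set b := T x
    set w := V x - Ω ^ 2 / 4 * rax x ^ 2 with hw
    have hb : 2 * g * b = max (μ - w) 0 := by
      have he : μ + Ω ^ 2 / 4 * rax x ^ 2 - V x = μ - w := by rw [hw]; ring
      show 2 * g * (1 / (2 * g) * max (μ + Ω ^ 2 / 4 * rax x ^ 2 - V x) 0) = _
      rw [he]
      field_simp
    have ha : 0 ≤ a := hρ.2.1 x
    have htf : tfIntegrand V g Ω ρ x - tfIntegrand V g Ω T x
        = w * (a - b) + g * (a ^ 2 - b ^ 2) := by
      simp only [tfIntegrand, hw]; ring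
    rw [htf]
    rcases le_or_gt (μ - w) 0 with h | h
    · have hb0 : b = 0 := by
        have := hb
        rw [max_eq_right h] at this
        nlinarith
      rw [hb0]
      nlinarith
    · have hbv : 2 * g * b = μ - w := by rw [hb, max_eq_left h.le]
      have hz : w - μ + 2 * g * b = 0 := by linarith
      have hkey : w * (a - b) + g * (a ^ 2 - b ^ 2) - (μ * (a - b) + g * (a - b) ^ 2)
          = (a - b) * (w - μ + 2 * g * b) := by ring
      rw [hz, mul_zero] at hkey
      linarith
  have hint_le := integral_mono hhint hfint hpt
  have e1 : (∫ x, (μ * (ρ x - T x) + g * (ρ x - T x) ^ 2))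
      = μ * ((∫ x, ρ x) - ∫ x, T x) + g * ∫ x, (ρ x - T x) ^ 2 := by
    rw [integral_add (hdiff.const_mul μ) (hd2.const_mul g), integral_const_mul,
      integral_const_mul, integral_sub hρ.2.2.1 hadmT.2.2.1]
  have e2 : (∫ x, (tfIntegrand V g Ω ρ x - tfIntegrand V g Ω T x))
      = (∫ x, tfIntegrand V g Ω ρ x) - ∫ x, tfIntegrand V g Ω T x := by
    rw [integral_sub (tfIntegrand_integrable V g Ω ρ hρ) (tfIntegrand_integrable V g Ω T hadmT)]
  rw [e1, e2, hρ.2.2.2.2.2.2, hadmT.2.2.2.2.2.2] at hint_le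
  simp only [sub_self, mul_zero, zero_add] at hint_le
  linarith
/-- **The 3D Thomas–Fermi functional attains its infimum at the explicit density
`ρ^TF_{g,Ω}(x) = (1/(2g))[μ + (Ω²/4) r(x)² − V(x)]₊`**, where `μ` is the unique real
number normalizing `∫ ρ^TF = 1`; the minimizer is unique up to sets of measure zero. -/
theorem tf3_minimizer (V : E3 → ℝ) (hVc : Continuous V) (s : ℝ) (hs : 2 < s)
    (hhom : Homogeneous V s) (hVpos : ∀ x : E3, ‖x‖ = 1 → 0 < V x)
    (g Ω : ℝ) (hg : 0 < g) (hΩ : 0 ≤ Ω) :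
    (∃! μ : ℝ, (∫ x, rhoTF V g Ω μ x) = 1) ∧
    ∀ μ : ℝ, (∫ x, rhoTF V g Ω μ x) = 1 →
      tfAdmissible V (rhoTF V g Ω μ) ∧
      (∫ x, tfIntegrand V g Ω (rhoTF V g Ω μ) x) = ETF V g Ω ∧
      ∀ ρ : E3 → ℝ, tfAdmissible V ρ →
        (∫ x, tfIntegrand V g Ω ρ x) = ETF V g Ω →
          ∀ᵐ x : E3, ρ x = rhoTF V g Ω μ x := by
  constructor
  · obtain ⟨μ, hμ⟩ := F_exists_one V hVc s hs hhom hVpos g Ω hg hΩ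
    exact ⟨μ, hμ, fun ν hν => F_unique V hVc s hs hhom hVpos g Ω hg hΩ hν hμ⟩
  · intro μ hμ
    have hadm := rhoTF_admissible V hVc s hs hhom hVpos g Ω hΩ μ hμ hg
    set T := rhoTF V g Ω μ with hTdef
    have hmem : (∫ x, tfIntegrand V g Ω T x)
        ∈ {e | ∃ ρ : E3 → ℝ, tfAdmissible V ρ ∧ e = ∫ x, tfIntegrand V g Ω ρ x} :=
      ⟨T, hadm, rfl⟩
    have hlb : ∀ e ∈ {e | ∃ ρ : E3 → ℝ, tfAdmissible V ρ ∧ e = ∫ x, tfIntegrand V g Ω ρ x},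
        (∫ x, tfIntegrand V g Ω T x) ≤ e := by
      rintro e ⟨ρ, hρ, rfl⟩
      have h := key_ineq V hVc s hs hhom hVpos g Ω hg hΩ μ hμ ρ hρ
      have h2 : 0 ≤ ∫ x, (ρ x - T x) ^ 2 := integral_nonneg fun x => sq_nonneg _
      nlinarith
    have hETF : ETF V g Ω = ∫ x, tfIntegrand V g Ω T x := by
      rw [ETF]
      exact le_antisymm (csInf_le ⟨_, hlb⟩ hmem) (le_csInf ⟨_, hmem⟩ hlb)
    refine ⟨hadm, hETF.symm, ?_⟩
    intro ρ hρ hEρ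
    have h := key_ineq V hVc s hs hhom hVpos g Ω hg hΩ μ hμ ρ hρ
    rw [hEρ, hETF] at *
    have h2 : 0 ≤ ∫ x, (ρ x - T x) ^ 2 := integral_nonneg fun x => sq_nonneg _
    have h3 : (∫ x, (ρ x - T x) ^ 2) = 0 := by nlinarith
    have h4 := (integral_eq_zero_iff_of_nonneg (fun x => sq_nonneg _)
      (sq_diff_integrable V hVc s hs hhom hVpos g Ω hg hΩ μ ρ hρ)).1 h3
    filter_upwards [h4] with x hx
    simp only [Pi.zero_apply] at hx
    have := pow_eq_zero_iff (n := 2) (by norm_num) |>.1 hx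
    linarith [this]
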